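/- Let n, p be coprime positive integers with 0 < p < n, and let G_{n,p} ⊂ GL(2,ℂ) be generated by diag(ζ, ζ^p), ζ = exp(2πi/n), acting on ℂ[u,v] by scaling. Then every invariant monomial u^a v^b (i.e., with a + pb ≡ 0 mod n) is a product of the monomials u^{i_k} v^{j_k}, 0 ≤ k ≤ e+1, where i_k, j_k are given by Riemenschneider's recursion from the Hirzebruch–Jung expansion n/(n-p) = [a₁,...,a_e]. -/

import Mathlib

/-- Evaluation of a Hirzebruch–Jung (negative-regular) continued fraction
`[a₁,...,a_e] = a₁ - 1/(a₂ - 1/(⋯ - 1/a_e))` as a rational number. -/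
def hjEval : List ℤ → ℚ
  | [] => 0
  | [a] => (a : ℚ)
  | a :: b :: l => (a : ℚ) - 1 / hjEval (b :: l)

/-- Continuant of a list, peeling from the left. -/
def cont : List ℤ → ℤ
  | [] => 1
  | [a] => a
  | a :: b :: l => a * cont (b :: l) - cont l

lemma cont_facts : ∀ l : List ℤ, (∀ z ∈ l, 2 ≤ z) → cont l.tail ≤ cont l ∧ 0 < cont l
  | [], _ => by simp [cont]
  | [a], h => by
      have := h a (by simp)
      simp only [cont, List.tail_cons]
      constructor <;> omega
  | a :: b :: m, h => by
      have ih := cont_facts (b :: m) (fun z hz => h z (List.mem_cons_of_mem _ hz))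
      have ha := h a (by simp)
      simp only [cont, List.tail_cons] at *
      constructor <;> nlinarith [ih.1, ih.2]

lemma cont_coprime : ∀ l : List ℤ, IsCoprime (cont l) (cont l.tail)
  | [] => by simpa [cont] using isCoprime_one_right
  | [a] => by simpa [cont] using isCoprime_one_right
  | a :: b :: m => by
      have ih := cont_coprime (b :: m)
      simp only [cont, List.tail_cons] at *
      have h2 : a * cont (b :: m) - cont m = -cont m + a * cont (b :: m) := by ring
      rw [h2]
      exact (ih.symm.neg_left).add_mul_right_left a

lemma hjEval_eq : ∀ l : List ℤ, (∀ z ∈ l, 2 ≤ z) → l ≠ [] →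
    hjEval l = (cont l : ℚ) / (cont l.tail : ℚ)
  | [], _, h => absurd rfl h
  | [a], _, _ => by simp [hjEval, cont]
  | a :: b :: m, h, _ => by
      have hm : ∀ z ∈ (b :: m), 2 ≤ z := fun z hz => h z (List.mem_cons_of_mem _ hz)
      have ih := hjEval_eq (b :: m) hm (by simp)
      have hf := cont_facts (b :: m) hm
      have hf2 := cont_facts m (fun z hz => hm z (List.mem_cons_of_mem _ hz))
      have hpos : (0:ℚ) < (cont (b :: m) : ℚ) := by exact_mod_cast hf.2
      have hpos2 : (0:ℚ) < (cont m : ℚ) := by exact_mod_cast hf2.2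
      show (a:ℚ) - 1 / hjEval (b :: m) = _
      rw [ih]
      simp only [cont, List.tail_cons]
      push_cast
      rw [one_div_div]
      field_simp

/-- Telescoping: any solution of Riemenschneider's recursion satisfies
`X (e+1) = X 1 * cont l - X 0 * cont l.tail`. -/
lemma riemen_key (e : ℕ) (he : 0 < e) (a X : ℕ → ℤ)
    (hX : ∀ k, 1 ≤ k → k ≤ e → X (k + 1) = a k * X k - X (k - 1)) :
    X (e + 1) = X 1 * cont (List.ofFn fun k : Fin e => a (k + 1))
              - X 0 * cont (List.tail (List.ofFn fun k : Fin e => a (k + 1))) := by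
  set l := List.ofFn (fun k : Fin e => a (k + 1)) with hldef
  have hlen : l.length = e := by simp [hldef]
  have hget : ∀ j, (hj : j < e) → l[j]'(by omega) = a (j + 1) := by
    intro j hj; simp [hldef]
  have peel : ∀ j, j + 1 < e →
      cont (l.drop j) = a (j + 1) * cont (l.drop (j + 1)) - cont (l.drop (j + 2)) := by
    intro j hj
    have h1 : l.drop j = l[j]'(by omega) :: l.drop (j + 1) :=
      List.drop_eq_getElem_cons (by omega)
    have h2 : l.drop (j + 1) = l[j+1]'(by omega) :: l.drop (j + 2) :=
      List.drop_eq_getElem_cons (by omega)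
    rw [h1, h2, cont, ← h2, hget j (by omega)]
  have hde : l.drop e = [] := by
    apply List.drop_eq_nil_of_le; omega
  have hde1 : l.drop (e - 1) = [a e] := by
    have h1 : l.drop (e - 1) = l[e-1]'(by omega) :: l.drop (e - 1 + 1) :=
      List.drop_eq_getElem_cons (by omega)
    have h2 : e - 1 + 1 = e := by omega
    rw [h1, hget (e-1) (by omega), h2, hde]
  have key : ∀ m, ∀ j, j + m = e - 1 →
      X (j + 1) * cont (l.drop j) - X j * cont (l.drop (j + 1)) = X (e + 1) := by
    intro m
    induction m with
    | zero =>
        intro j hj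
        have hj' : j = e - 1 := by omega
        subst hj'
        rw [hde1]
        have h2 : e - 1 + 1 = e := by omega
        rw [h2, hde]
        have := hX e he le_rfl
        simp only [cont] at *
        rw [this]; ring
    | succ m ih =>
        intro j hj
        have h1 : j + 1 < e := by omega
        rw [peel j h1]
        have h2 := hX (j + 1) (by omega) (by omega)
        simp only [Nat.add_sub_cancel] at h2
        have h3 := ih (j + 1) (by omega)
        rw [← h3]
        have : j + 1 + 1 = j + 2 := rfl
        rw [this] at *
        linear_combination (-cont (l.drop (j+1))) * h2
  have := key (e - 1) 0 (by omega)
  simpa [List.drop_one] using this.symm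

lemma dvd_all (n e : ℕ) (a X : ℕ → ℤ) (h0 : (n:ℤ) ∣ X 0) (h1 : (n:ℤ) ∣ X 1)
    (hrec : ∀ k, 1 ≤ k → k ≤ e → X (k + 1) = a k * X k - X (k - 1)) :
    ∀ k, k ≤ e + 1 → (n:ℤ) ∣ X k := by
  intro k
  induction k using Nat.strong_induction_on with
  | _ k ih =>
    match k with
    | 0 => intro _; exact h0
    | 1 => intro _; exact h1
    | (k + 2) =>
      intro hk
      rw [hrec (k + 1) (by omega) (by omega)]
      simp only [Nat.add_sub_cancel]
      exact dvd_sub (Dvd.dvd.mul_left (ih (k + 1) (by omega) (by omega)) _)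
        (ih k (by omega) (by omega))


lemma one_sum (N K : ℕ) (hK : K < N) (A : ℤ) (f : ℕ → ℤ) :
    ∑ k ∈ Finset.range N, (if k = K then A else 0) * f k = A * f K := by
  have h : ∀ k ∈ Finset.range N, (if k = K then A else 0) * f k
      = if k = K then A * f K else 0 := by
    intro k _; split_ifs with h <;> simp [h]
  rw [Finset.sum_congr rfl h, Finset.sum_ite_eq']
  simp [Finset.mem_range, hK]

lemma two_sum (N K : ℕ) (hK : K + 1 < N) (A B : ℤ) (f : ℕ → ℤ) :
    ∑ k ∈ Finset.range N, (if k = K then A else if k = K + 1 then B else 0) * f k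
      = A * f K + B * f (K + 1) := by
  have h : ∀ k ∈ Finset.range N,
      (if k = K then A else if k = K + 1 then B else 0) * f k
        = (if k = K then A * f K else 0) + (if k = K + 1 then B * f (K + 1) else 0) := by
    intro k _
    rcases eq_or_ne k K with h | h
    · have h2 : k ≠ K + 1 := by omega
      simp [h, h2]
    · rcases eq_or_ne k (K + 1) with h2 | h2
      · simp [h, h2]
      · simp [h, h2]
  rw [Finset.sum_congr rfl h, Finset.sum_add_distrib, Finset.sum_ite_eq', Finset.sum_ite_eq']
  simp [Finset.mem_range, hK, (show K < N by omega)]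


/-- every invariant monomial `u^a v^b` (i.e. `a + pb ≡ 0 (mod n)`)
of the cyclic group generated by `diag(ζ, ζ^p)` is a product (with
multiplicities `c k`) of the monomials `u^{iₖ} v^{jₖ}`, `0 ≤ k ≤ e+1`, given by
Riemenschneider's recursion from the Hirzebruch–Jung expansion
`n/(n-p) = [a₁,...,a_e]`. -/
theorem stmt19 (n p : ℕ) (hp : 0 < p) (hpn : p < n) (hcop : Nat.Coprime p n)
    (e : ℕ) (he : 0 < e) (a I J : ℕ → ℤ)
    (ha : ∀ k, 1 ≤ k → k ≤ e → 2 ≤ a k)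
    (hHJ : hjEval (List.ofFn fun k : Fin e => a (k + 1)) = (n : ℚ) / ((n : ℚ) - (p : ℚ)))
    (hI0 : I 0 = (n : ℤ)) (hI1 : I 1 = (n : ℤ) - (p : ℤ))
    (hIrec : ∀ k, 1 ≤ k → k ≤ e → I (k + 1) = a k * I k - I (k - 1))
    (hJ0 : J 0 = 0) (hJ1 : J 1 = 1)
    (hJrec : ∀ k, 1 ≤ k → k ≤ e → J (k + 1) = a k * J k - J (k - 1))
    (x y : ℕ) (hinv : n ∣ x + p * y) :
    ∃ c : ℕ → ℕ,
      (x : ℤ) = ∑ k ∈ Finset.range (e + 2), (c k : ℤ) * I k ∧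
      (y : ℤ) = ∑ k ∈ Finset.range (e + 2), (c k : ℤ) * J k := by
  set l := List.ofFn (fun k : Fin e => a (k + 1)) with hldef
  have hmem : ∀ z ∈ l, 2 ≤ z := by
    intro z hz
    rw [hldef, List.mem_ofFn] at hz
    obtain ⟨k, rfl⟩ := hz
    exact ha _ (by omega) (by omega)
  have hne : l ≠ [] := by
    rw [hldef]; simp; omega
  have hcf := cont_facts l hmem
  have hcf2 := cont_facts l.tail (fun z hz => hmem z (List.mem_of_mem_tail hz))
  have hcop' := cont_coprime l
  have hnpos : (0:ℤ) < n := by exact_mod_cast hp.trans hpn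
  -- cont l = n, cont l.tail = n - p
  rw [hjEval_eq l hmem hne] at hHJ
  have htpos : (0:ℚ) < (cont l.tail : ℚ) := by exact_mod_cast hcf2.2
  have hnpq : (0:ℚ) < (n:ℚ) - p := by
    have : (p:ℚ) < n := by exact_mod_cast hpn
    linarith
  have hcross : (cont l) * ((n:ℤ) - p) = (n:ℤ) * cont l.tail := by
    have := hHJ
    field_simp at this
    rw [mul_comm (n:ℤ)]
    exact_mod_cast this
  have hcopnp : IsCoprime (n:ℤ) ((n:ℤ) - p) := by
    have h1 : IsCoprime (n:ℤ) (p:ℤ) := by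
      rw [Int.isCoprime_iff_gcd_eq_one]
      simpa [Int.gcd_natCast_natCast, Nat.coprime_comm] using hcop
    have h2 := (h1.neg_right).add_mul_left_right 1
    have h3 : -(p:ℤ) + (n:ℤ) * 1 = (n:ℤ) - p := by ring
    rwa [h3] at h2
  have hdl : cont l ∣ (n:ℤ) := by
    apply hcop'.dvd_of_dvd_mul_right
    rw [← hcross]
    exact Dvd.intro _ rfl
  have hdn : (n:ℤ) ∣ cont l := by
    have h1 : (n:ℤ) ∣ cont l * ((n:ℤ) - p) := by
      rw [hcross]; exact Dvd.intro _ rfl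
    exact hcopnp.dvd_of_dvd_mul_right h1
  have hcl : cont l = (n:ℤ) := Int.dvd_antisymm hcf.2.le hnpos.le hdl hdn
  have hct : cont l.tail = (n:ℤ) - p := by
    have := hcross
    rw [hcl] at this
    exact (mul_left_cancel₀ (ne_of_gt hnpos) this).symm
  -- endpoint values
  have hIe : I (e + 1) = 0 := by
    have := riemen_key e he a I hIrec
    rw [hI0, hI1, hcl, hct] at this
    rw [this]; ring
  have hJe : J (e + 1) = (n:ℤ) := by
    have := riemen_key e he a J hJrec
    rw [hJ0, hJ1, hcl, hct] at this
    rw [this]; ring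
  -- divisibility of I k + p * J k
  have hdvd : ∀ k, k ≤ e + 1 → (n:ℤ) ∣ I k + p * J k := by
    apply dvd_all n e a (fun k => I k + p * J k)
    · rw [hI0, hJ0]; simp
    · rw [hI1, hJ1]; simp
    · intro k h1 h2
      rw [hIrec k h1 h2, hJrec k h1 h2]; ring
  -- determinant identity
  have hdet : ∀ k, k ≤ e → I k * J (k + 1) - I (k + 1) * J k = (n:ℤ) := by
    intro k
    induction k with
    | zero => intro _; rw [hI0, hI1, hJ0, hJ1]; ring
    | succ k ih =>
      intro hk
      have ihk := ih (by omega)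
      rw [hIrec (k + 1) (by omega) hk, hJrec (k + 1) (by omega) hk]
      simp only [Nat.add_sub_cancel]
      linear_combination ihk
  -- casework
  by_cases hx0 : x = 0
  · subst hx0
    have hny : n ∣ y := by
      have h1 : n ∣ p * y := by simpa using hinv
      exact Nat.Coprime.dvd_of_dvd_mul_left hcop.symm h1
    obtain ⟨m, rfl⟩ := hny
    have hcast0 : ∀ k : ℕ, ((if k = e + 1 then m else 0 : ℕ) : ℤ)
        = if k = e + 1 then (m:ℤ) else 0 := by
      intro k; split_ifs <;> simp
    refine ⟨fun k => if k = e + 1 then m else 0, ?_, ?_⟩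
    · have h1 : ∑ k ∈ Finset.range (e+2), ((if k = e + 1 then m else 0 : ℕ):ℤ) * I k
          = ∑ k ∈ Finset.range (e+2), (if k = e + 1 then (m:ℤ) else 0) * I k :=
        Finset.sum_congr rfl (fun k _ => by rw [hcast0 k])
      rw [h1, one_sum (e+2) (e+1) (by omega) (m:ℤ) I, hIe]
      simp
    · have h1 : ∑ k ∈ Finset.range (e+2), ((if k = e + 1 then m else 0 : ℕ):ℤ) * J k
          = ∑ k ∈ Finset.range (e+2), (if k = e + 1 then (m:ℤ) else 0) * J k :=
        Finset.sum_congr rfl (fun k _ => by rw [hcast0 k])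
      rw [h1, one_sum (e+2) (e+1) (by omega) (m:ℤ) J, hJe]
      push_cast; ring
  · have hxpos : (0:ℤ) < x := by
      have : 0 < x := Nat.pos_of_ne_zero hx0
      exact_mod_cast this
    set S := (Finset.range (e + 2)).filter (fun k => (x:ℤ) * J k ≤ (y:ℤ) * I k) with hS
    have h0S : (0:ℕ) ∈ S := by
      simp only [hS, Finset.mem_filter, Finset.mem_range]
      refine ⟨by omega, ?_⟩
      rw [hI0, hJ0]
      have hy : (0:ℤ) ≤ y := by positivity
      nlinarith
    have hSne : S.Nonempty := ⟨0, h0S⟩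
    obtain ⟨K, hKS, hKmax⟩ : ∃ K, K ∈ S ∧ ∀ k ∈ S, k ≤ K :=
      ⟨S.max' hSne, S.max'_mem hSne, fun k hk => S.le_max' k hk⟩
    have hKmem : K < e + 2 ∧ (x:ℤ) * J K ≤ (y:ℤ) * I K := by
      simpa [hS, Finset.mem_filter, Finset.mem_range] using hKS
    have hKne : K ≠ e + 1 := by
      intro h
      have h2 := hKmem.2
      rw [h, hIe, hJe] at h2
      nlinarith
    have hKle : K ≤ e := by
      have := hKmem.1; omega
    have hK1 : K + 1 ∉ S := by
      intro h
      have := hKmax _ h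
      omega
    have hα : (0:ℤ) < (x:ℤ) * J (K + 1) - (y:ℤ) * I (K + 1) := by
      by_contra hcon
      apply hK1
      simp only [hS, Finset.mem_filter, Finset.mem_range]
      exact ⟨by omega, by linarith⟩
    have hβ : (0:ℤ) ≤ (y:ℤ) * I K - (x:ℤ) * J K := by linarith [hKmem.2]
    have hdvdxy : (n:ℤ) ∣ (x:ℤ) + p * y := by
      have := Int.natCast_dvd_natCast.2 hinv
      push_cast at this
      exact this
    have hnα : (n:ℤ) ∣ (x:ℤ) * J (K + 1) - (y:ℤ) * I (K + 1) := by
      have hd := hdvd (K + 1) (by omega)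
      have heq : (x:ℤ) * J (K + 1) - (y:ℤ) * I (K + 1)
          = J (K + 1) * ((x:ℤ) + p * y) - y * (I (K + 1) + p * J (K + 1)) := by ring
      rw [heq]
      exact dvd_sub (hdvdxy.mul_left _) (hd.mul_left _)
    have hnβ : (n:ℤ) ∣ (y:ℤ) * I K - (x:ℤ) * J K := by
      have hd := hdvd K (by omega)
      have heq : (y:ℤ) * I K - (x:ℤ) * J K
          = y * (I K + p * J K) - J K * ((x:ℤ) + p * y) := by ring
      rw [heq]
      exact dvd_sub (hd.mul_left _) (hdvdxy.mul_left _)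
    obtain ⟨A, hA⟩ := hnα
    obtain ⟨B, hB⟩ := hnβ
    have hApos : 0 ≤ A := by
      have h1 : (0:ℤ) < (n:ℤ) * A := hA ▸ hα
      rcases le_or_gt 0 A with h | h
      · exact h
      · exact absurd h1 (not_lt.2 (mul_neg_of_pos_of_neg hnpos h).le)
    have hBpos : 0 ≤ B := by
      have h1 : (0:ℤ) ≤ (n:ℤ) * B := hB ▸ hβ
      rcases le_or_gt 0 B with h | h
      · exact h
      · exact absurd h1 (not_le.2 (mul_neg_of_pos_of_neg hnpos h))
    have hdetK := hdet K hKle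
    have hxId : (x:ℤ) = A * I K + B * I (K + 1) := by
      apply mul_left_cancel₀ (ne_of_gt hnpos)
      have expand : ((x:ℤ) * J (K + 1) - (y:ℤ) * I (K + 1)) * I K
          + ((y:ℤ) * I K - (x:ℤ) * J K) * I (K + 1)
          = x * (I K * J (K + 1) - I (K + 1) * J K) := by ring
      rw [hA, hB, hdetK] at expand
      linear_combination -expand
    have hyJd : (y:ℤ) = A * J K + B * J (K + 1) := by
      apply mul_left_cancel₀ (ne_of_gt hnpos)
      have expand : ((x:ℤ) * J (K + 1) - (y:ℤ) * I (K + 1)) * J K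
          + ((y:ℤ) * I K - (x:ℤ) * J K) * J (K + 1)
          = y * (I K * J (K + 1) - I (K + 1) * J K) := by ring
      rw [hA, hB, hdetK] at expand
      linear_combination -expand
    have hcast : ∀ k : ℕ,
        ((if k = K then A.toNat else if k = K + 1 then B.toNat else 0 : ℕ) : ℤ)
          = if k = K then A else if k = K + 1 then B else 0 := by
      intro k
      split_ifs <;> simp [Int.toNat_of_nonneg hApos, Int.toNat_of_nonneg hBpos]
    refine ⟨fun k => if k = K then A.toNat else if k = K + 1 then B.toNat else 0, ?_, ?_⟩
    · have h1 : ∑ k ∈ Finset.range (e+2),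
          ((if k = K then A.toNat else if k = K + 1 then B.toNat else 0 : ℕ):ℤ) * I k
          = ∑ k ∈ Finset.range (e+2), (if k = K then A else if k = K + 1 then B else 0) * I k :=
        Finset.sum_congr rfl (fun k _ => by rw [hcast k])
      rw [h1, two_sum (e+2) K (by omega) A B I]
      exact hxId
    · have h1 : ∑ k ∈ Finset.range (e+2),
          ((if k = K then A.toNat else if k = K + 1 then B.toNat else 0 : ℕ):ℤ) * J k
          = ∑ k ∈ Finset.range (e+2), (if k = K then A else if k = K + 1 then B else 0) * J k :=
        Finset.sum_congr rfl (fun k _ => by rw [hcast k])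
      rw [h1, two_sum (e+2) K (by omega) A B J]
      exact hyJd
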